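/- For every permutation τ of {1,…,n}, Ā(T(τ)) = 2 Ā(τ). -/

import Mathlib

open Equiv

namespace Rauzy

/-- `intervalCycle n a b` is the permutation of `Fin n` sending `j ↦ j+1` for
`a ≤ j < b`, sending `b ↦ a`, and fixing everything outside the interval `[a,b]`.
(It is the identity when `¬ (a ≤ b ∧ b < n)`.) -/
def intervalCycle (n a b : ℕ) : Equiv.Perm (Fin n) :=
  if hab : a ≤ b ∧ b < n then
    { toFun := fun j =>
        ⟨if a ≤ j.val ∧ j.val < b then j.val + 1 else if j.val = b then a else j.val,
          by have := j.isLt; split_ifs <;> omega⟩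
      invFun := fun j =>
        ⟨if a < j.val ∧ j.val ≤ b then j.val - 1 else if j.val = a then b else j.val,
          by have := j.isLt; split_ifs <;> omega⟩
      left_inv := by
        intro j
        have hj := j.isLt
        apply Fin.ext
        simp only [Fin.val_mk]
        split_ifs <;> omega
      right_inv := by
        intro j
        have hj := j.isLt
        apply Fin.ext
        simp only [Fin.val_mk]
        split_ifs <;> omega }
  else 1

/-- The Rauzy operator `L`: in 1-indexed terms, `L σ = γ ∘ σ` where `γ` fixes every
`j ≤ σ(1)`, maps `j ↦ j+1` for `σ(1) < j < n`, and maps `n ↦ σ(1)+1`.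
(Everything here is 0-indexed, so `σ(1)` is `σ 0`, and `γ` is the cycle
`intervalCycle n (σ(1)+1) (n-1)` in 0-indexed terms.) -/
def Lop {n : ℕ} (σ : Equiv.Perm (Fin n)) : Equiv.Perm (Fin n) :=
  if h : 0 < n then intervalCycle n ((σ ⟨0, h⟩).val + 1) (n - 1) * σ else σ

/-- The Rauzy operator `R`: in 1-indexed terms, `R σ = σ ∘ δ` where `δ` fixes every
`i ≥ σ⁻¹(n)`, maps `i ↦ i+1` for `1 ≤ i < σ⁻¹(n)−1`, and maps `σ⁻¹(n)−1 ↦ 1`. -/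
def Rop {n : ℕ} (σ : Equiv.Perm (Fin n)) : Equiv.Perm (Fin n) :=
  if h : 0 < n then σ * intervalCycle n 0 ((σ.symm ⟨n - 1, by omega⟩).val - 1) else σ

/-- The extended Rauzy operator `L' σ = (L (σ⁻¹))⁻¹`. -/
def Lext {n : ℕ} (σ : Equiv.Perm (Fin n)) : Equiv.Perm (Fin n) := (Lop σ⁻¹)⁻¹

/-- The extended Rauzy operator `R' σ = (R (σ⁻¹))⁻¹`. -/
def Rext {n : ℕ} (σ : Equiv.Perm (Fin n)) : Equiv.Perm (Fin n) := (Rop σ⁻¹)⁻¹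

/-- `σ` and `τ` are in the same Rauzy class, i.e. `τ = w σ` for a finite word `w` in
`L, R, L⁻¹, R⁻¹`: the equivalence relation generated by the operators `L` and `R`. -/
def REquiv {n : ℕ} : Equiv.Perm (Fin n) → Equiv.Perm (Fin n) → Prop :=
  Relation.EqvGen fun σ τ => τ = Lop σ ∨ τ = Rop σ

/-- `σ` and `τ` are in the same extended Rauzy class, i.e. related by a finite word in
`L, R, L', R'` and their inverses. -/
def ExtEquiv {n : ℕ} : Equiv.Perm (Fin n) → Equiv.Perm (Fin n) → Prop :=
  Relation.EqvGen fun σ τ => τ = Lop σ ∨ τ = Rop σ ∨ τ = Lext σ ∨ τ = Rext σ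

/-- `σ` is irreducible: in 1-indexed terms, for no `1 ≤ k < n` does
`σ({1,…,k}) = {n−k+1,…,n}` hold. -/
def Irreducible {n : ℕ} (σ : Equiv.Perm (Fin n)) : Prop :=
  ∀ k : ℕ, 0 < k → k < n →
    Finset.image σ (Finset.univ.filter fun i : Fin n => i.val < k) ≠
      Finset.univ.filter fun i : Fin n => n - k ≤ i.val

/-- The successor map of the cycle-invariant construction, acting on the set of top
arcs of the diagram of `σ` together with a marker for the rank path.

The element `x = 0` represents the two open endpoints of the rank path (top-left and
bottom-right), and an element `x ∈ {1,…,n−1}` represents the top arc joining the top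
points `x` and `x+1` (1-indexed).  Starting from a top arc (or from the top-left
endpoint), the path of the diagram goes down from the top black point `x+1`
(1-indexed) along an edge, either reaching the bottom-right endpoint (if
`σ⁻¹(x+1) = n`), or continuing through a bottom arc and a second edge upward —
possibly also crossing the `−1` mark — to the next top arc. -/
def nextArc {n : ℕ} (σ : Equiv.Perm (Fin n)) (x : Fin n) : Fin n :=
  have hn : 0 < n := Nat.lt_of_le_of_lt (Nat.zero_le _) x.isLt
  if hj : (σ.symm x).val = n - 1 then
    -- the rank path ends at the bottom-right endpoint; close the orbit back to `0`
    ⟨0, hn⟩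
  else
    have hlt : (σ.symm x).val + 1 < n := by have := (σ.symm x).isLt; omega
    have hv := (σ ⟨(σ.symm x).val + 1, hlt⟩).isLt
    if hm : (σ ⟨(σ.symm x).val + 1, hlt⟩).val = n - 1 then
      -- the upward edge reaches the top-right point: cross the `−1` mark, then
      -- follow the edge from the bottom-left point, reaching top arc `σ(1)` (1-indexed)
      ⟨(σ ⟨0, hn⟩).val + 1, by
        have h0 : σ ⟨0, hn⟩ ≠ σ ⟨(σ.symm x).val + 1, hlt⟩ := by
          intro hcontra
          have h1 := σ.injective hcontra
          simp only [Fin.mk.injEq] at h1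
          omega
        have h2 : (σ ⟨0, hn⟩).val ≠ n - 1 := by
          intro hcontra
          exact h0 (Fin.ext (by rw [hcontra, hm]))
        have h3 := (σ ⟨0, hn⟩).isLt
        omega⟩
    else
      -- reach the top arc whose left (white) endpoint is the top point `σ(j+1)` (1-indexed)
      ⟨(σ ⟨(σ.symm x).val + 1, hlt⟩).val + 1, by omega⟩

/-- The orbit of `x` under the successor map of the cycle-invariant construction. -/
def arcOrbit {n : ℕ} (σ : Equiv.Perm (Fin n)) (x : Fin n) : Finset (Fin n) :=
  (Finset.range n).image fun k => (nextArc σ)^[k] x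

/-- The rank `r(σ)`: the number of top arcs lying on the open (rank) path of the
cycle-invariant construction, i.e. the size of the orbit of the marker `0` minus one. -/
def rank {n : ℕ} (σ : Equiv.Perm (Fin n)) : ℕ :=
  if h : 0 < n then (arcOrbit σ ⟨0, h⟩).card - 1 else 0

/-- The cycle invariant `λ(σ)`: the multiset of the lengths (numbers of top arcs) of
the closed cycles of the cycle-invariant construction.  Each closed cycle is an orbit
of `nextArc σ` other than the orbit of the marker `0` (which is the rank path), counted
once via its minimal representative, and its length is the size of the orbit. -/
def cycleInv {n : ℕ} (σ : Equiv.Perm (Fin n)) : Multiset ℕ :=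
  if h : 0 < n then
    Multiset.map (fun x => (arcOrbit σ x).card)
      (Finset.univ.filter fun x : Fin n =>
        x ∉ arcOrbit σ ⟨0, h⟩ ∧ ∀ y ∈ arcOrbit σ x, x ≤ y).val
  else 0

/-- The extended cycle invariant `λ'(σ)`: the multiset `λ(σ)` together with one
additional part equal to the rank `r(σ)`. -/
def cycleInvExt {n : ℕ} (σ : Equiv.Perm (Fin n)) : Multiset ℕ := rank σ ::ₘ cycleInv σ

/-- `chi σ I` is `χ(I)`: the number of pairs `i < j` in `I` with `σ i < σ j`
(pairs of non-crossing edges of the diagram of `σ`). -/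
def chi {n : ℕ} (σ : Equiv.Perm (Fin n)) (I : Finset (Fin n)) : ℕ :=
  ((I ×ˢ I).filter fun p => p.1 < p.2 ∧ σ p.1 < σ p.2).card

/-- The Arf invariant `Ā(σ) = Σ_{I ⊆ {1,…,n}} (−1)^(|I| + χ(I))`. -/
def arfBar {n : ℕ} (σ : Equiv.Perm (Fin n)) : ℤ :=
  ∑ I ∈ (Finset.univ : Finset (Fin n)).powerset, (-1 : ℤ) ^ (I.card + chi σ I)

/-- The companion Arf sum `A(σ) = Σ_{I ⊆ {1,…,n}} (−1)^(χ(I))`. -/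
def arfA {n : ℕ} (σ : Equiv.Perm (Fin n)) : ℤ :=
  ∑ I ∈ (Finset.univ : Finset (Fin n)).powerset, (-1 : ℤ) ^ (chi σ I)

/-- The sign invariant `s(σ) = sign(Ā(σ)) ∈ {−1, 0, +1}`. -/
def sgn {n : ℕ} (σ : Equiv.Perm (Fin n)) : ℤ := (arfBar σ).sign

/-- The surgery operator `T`, mapping a permutation `τ` of `{1,…,n}` to the permutation
`T τ` of `{1,…,n+2}` defined (1-indexed) by `(T τ)(1) = τ(1)+2`, `(T τ)(2) = 1`, and,
for `1 ≤ i ≤ n`, `(T τ)(i+2) = τ(i)+1` if `τ(i) ≤ τ(1)` and `(T τ)(i+2) = τ(i)+2`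
otherwise.  It is built here as `α ∘ ρ ∘ β`, where `β` rearranges the positions
(0-indexed: `0 ↦ n+1`, `1 ↦ n`, `k+2 ↦ k`), `ρ` acts as `τ` on the first `n` points
and fixes the last two, and `α` adjusts the values (0-indexed: `v ↦ v+1` for
`v ≤ τ(0)`, `v ↦ v+2` for `τ(0) < v ≤ n−1`, `n ↦ 0`, `n+1 ↦ τ(0)+2`). -/
def Toper {n : ℕ} (τ : Equiv.Perm (Fin n)) : Equiv.Perm (Fin (n + 2)) :=
  if h : 0 < n then
    (intervalCycle (n + 2) ((τ ⟨0, h⟩).val + 2) (n + 1) * intervalCycle (n + 2) 0 n) *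
      (finSumFinEquiv.permCongr (Equiv.sumCongr τ (1 : Equiv.Perm (Fin 2)))) *
      (Equiv.swap (⟨n, by omega⟩ : Fin (n + 2)) ⟨n + 1, by omega⟩ *
        ((finRotate (n + 2))⁻¹) ^ 2)
  else 1

/-- `addOp σ l` is the permutation `add_ℓ(σ)` of `{1,…,n+1}` (with, 1-indexed,
`ℓ = l+1`), whose one-line notation is `(σ(1)+1, …, σ(ℓ−1)+1, 1, σ(ℓ)+1, …, σ(n)+1)`.
It is built as `α ∘ ρ ∘ β⁻¹` where `β` rearranges positions, `ρ` acts as `σ` on the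
first `n` points, and `α` shifts all values up by one cyclically. -/
def addOp {n : ℕ} (σ : Equiv.Perm (Fin n)) (l : Fin (n + 1)) : Equiv.Perm (Fin (n + 1)) :=
  intervalCycle (n + 1) 0 n *
    (finSumFinEquiv.permCongr (Equiv.sumCongr σ (1 : Equiv.Perm (Fin 1)))) *
    (intervalCycle (n + 1) l.val n)⁻¹

/-- The permutation `id'_n` of `{1,…,n}` (for `n ≥ 3`), with (1-indexed) values
`id'_n(1) = 1`, `id'_n(2) = n−1`, `id'_n(n) = n`, and `id'_n(i) = i−1` for
`3 ≤ i ≤ n−1`. -/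
def idP (n : ℕ) : Equiv.Perm (Fin n) :=
  if h : 3 ≤ n then
    { toFun := fun i =>
        ⟨if i.val = 0 then 0 else if i.val = 1 then n - 2
          else if i.val = n - 1 then n - 1 else i.val - 1,
          by have := i.isLt; split_ifs <;> omega⟩
      invFun := fun j =>
        ⟨if j.val = 0 then 0 else if j.val = n - 2 then 1
          else if j.val = n - 1 then n - 1 else j.val + 1,
          by have := j.isLt; split_ifs <;> omega⟩
      left_inv := by
        intro i
        have hi := i.isLt
        apply Fin.ext
        simp only [Fin.val_mk]
        split_ifs <;> (try contradiction) <;> omega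
      right_inv := by
        intro j
        have hj := j.isLt
        apply Fin.ext
        simp only [Fin.val_mk]
        split_ifs <;> (try contradiction) <;> omega }
  else 1

/-- The set of descents of `σ`: positions `i` (1-indexed, `i < n`) such that
`σ(i+1) = σ(i) − 1`. -/
def descentSet {n : ℕ} (σ : Equiv.Perm (Fin n)) : Finset (Fin n) :=
  Finset.univ.filter fun i =>
    ∃ j : Fin n, j.val = i.val + 1 ∧ (σ j).val + 1 = (σ i).val

/-- The set of special descents of `σ`: positions `i` (1-indexed, `i < n`) such that
`σ(i+1) = n` and `σ(1) = σ(i) − 1`. -/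
def specialDescentSet {n : ℕ} (σ : Equiv.Perm (Fin n)) : Finset (Fin n) :=
  Finset.univ.filter fun i =>
    ∃ j z : Fin n, z.val = 0 ∧ j.val = i.val + 1 ∧ (σ j).val = n - 1 ∧
      (σ z).val + 1 = (σ i).val

/-- The positions of the edges kept when forming the primitive of `σ`:
those which are neither descents nor special descents. -/
def keepSet {n : ℕ} (σ : Equiv.Perm (Fin n)) : Finset (Fin n) :=
  Finset.univ.filter fun i => i ∉ descentSet σ ∧ i ∉ specialDescentSet σ

/-- The size of the primitive of `σ`. -/
def primSize {n : ℕ} (σ : Equiv.Perm (Fin n)) : ℕ := (keepSet σ).card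

/-- The primitive `prim(σ)` of `σ`: the permutation induced by the edges `(i, σ(i))`
of `σ` which are neither descents nor special descents, after order-preserving
relabelling of the remaining positions and of the remaining values. -/
def primPerm {n : ℕ} (σ : Equiv.Perm (Fin n)) : Equiv.Perm (Fin (primSize σ)) :=
  ((keepSet σ).orderIsoOfFin rfl).toEquiv.trans
    ((Equiv.subtypeEquiv (p := fun x => x ∈ keepSet σ)
        (q := fun y => y ∈ Finset.image σ (keepSet σ)) σ
        (fun _ => (Function.Injective.mem_finset_image σ.injective).symm)).trans
      ((Finset.image σ (keepSet σ)).orderIsoOfFin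
        (by rw [Finset.card_image_of_injective _ σ.injective]; rfl)).toEquiv.symm)



section ArfT

variable {n : ℕ}

lemma intervalCycle_apply_val {n a b : ℕ} (hab : a ≤ b ∧ b < n) (j : Fin n) :
    (intervalCycle n a b j).val =
      if a ≤ j.val ∧ j.val < b then j.val + 1 else if j.val = b then a else j.val := by
  rw [intervalCycle, dif_pos hab]; rfl

lemma rot2_apply (y k : Fin (n + 2))
    (h : finRotate (n + 2) (finRotate (n + 2) y) = k) :
    (((finRotate (n + 2))⁻¹) ^ 2) k = y := by
  subst h
  simp only [sq, Equiv.Perm.mul_apply, Equiv.Perm.inv_def, Equiv.symm_apply_apply]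

lemma finRotate_val (a : Fin (n + 2)) :
    (finRotate (n + 2) a).val = (a.val + 1) % (n + 2) := by
  rw [finRotate_succ_apply, Fin.add_def, Fin.val_one]

lemma rho_apply (τ : Equiv.Perm (Fin n)) (i : Fin n) :
    (finSumFinEquiv.permCongr (Equiv.sumCongr τ (1 : Equiv.Perm (Fin 2))))
      ⟨i.val, by omega⟩ = ⟨(τ i).val, by omega⟩ := by
  have hsymm : finSumFinEquiv.symm (⟨i.val, by omega⟩ : Fin (n + 2)) = Sum.inl i := by
    rw [Equiv.symm_apply_eq, finSumFinEquiv_apply_left]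
    exact Fin.ext rfl
  rw [Equiv.permCongr_apply, hsymm]
  simp only [Equiv.sumCongr_apply, Sum.map_inl, finSumFinEquiv_apply_left]
  exact Fin.ext rfl

lemma rho_fix (τ : Equiv.Perm (Fin n)) (m : ℕ) (hm1 : n ≤ m) (hm2 : m < n + 2) :
    (finSumFinEquiv.permCongr (Equiv.sumCongr τ (1 : Equiv.Perm (Fin 2))))
      ⟨m, hm2⟩ = ⟨m, hm2⟩ := by
  have hsymm : finSumFinEquiv.symm (⟨m, hm2⟩ : Fin (n + 2)) = Sum.inr ⟨m - n, by omega⟩ := by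
    rw [Equiv.symm_apply_eq, finSumFinEquiv_apply_right]
    apply Fin.ext
    simp only [Fin.coe_natAdd]
    omega
  rw [Equiv.permCongr_apply, hsymm]
  simp only [Equiv.sumCongr_apply, Sum.map_inr, Equiv.Perm.coe_one, id_eq,
    finSumFinEquiv_apply_right]
  apply Fin.ext
  simp only [Fin.coe_natAdd]
  omega

lemma Toper_apply_zero (h : 0 < n) (τ : Equiv.Perm (Fin n)) :
    (Toper τ ⟨0, by omega⟩).val = (τ ⟨0, h⟩).val + 2 := by
  have hq : (((finRotate (n + 2))⁻¹) ^ 2) ⟨0, by omega⟩ = ⟨n, by omega⟩ := by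
    apply rot2_apply
    apply Fin.ext
    rw [finRotate_val, finRotate_val]
    simp [Nat.mod_eq_of_lt, Nat.mod_self]
  have hs : Equiv.swap (⟨n, by omega⟩ : Fin (n + 2)) ⟨n + 1, by omega⟩ ⟨n, by omega⟩
      = ⟨n + 1, by omega⟩ := Equiv.swap_apply_left _ _
  have ht0 := (τ ⟨0, h⟩).isLt
  rw [Toper, dif_pos h]
  simp only [Equiv.Perm.mul_apply, hq, hs]
  rw [rho_fix τ (n + 1) (by omega) (by omega)]
  clear hq hs
  have h2 : (intervalCycle (n + 2) 0 n ⟨n + 1, by omega⟩) = ⟨n + 1, by omega⟩ := by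
    apply Fin.ext
    rw [intervalCycle_apply_val ⟨Nat.zero_le _, by omega⟩]
    simp only [Fin.val_mk]
    split_ifs <;> omega
  rw [h2, intervalCycle_apply_val ⟨by omega, by omega⟩]
  simp only [Fin.val_mk]
  split_ifs <;> omega

lemma Toper_apply_one (h : 0 < n) (τ : Equiv.Perm (Fin n)) :
    (Toper τ ⟨1, by omega⟩).val = 0 := by
  have hq : (((finRotate (n + 2))⁻¹) ^ 2) ⟨1, by omega⟩ = ⟨n + 1, by omega⟩ := by
    apply rot2_apply
    apply Fin.ext
    rw [finRotate_val, finRotate_val]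
    simp only [Fin.val_mk]
    rw [Nat.mod_self]
    simp [Nat.mod_eq_of_lt]
  have hs : Equiv.swap (⟨n, by omega⟩ : Fin (n + 2)) ⟨n + 1, by omega⟩ ⟨n + 1, by omega⟩
      = ⟨n, by omega⟩ := Equiv.swap_apply_right _ _
  have ht0 := (τ ⟨0, h⟩).isLt
  rw [Toper, dif_pos h]
  simp only [Equiv.Perm.mul_apply, hq, hs]
  rw [rho_fix τ n (by omega) (by omega)]
  clear hq hs
  have h2 : (intervalCycle (n + 2) 0 n ⟨n, by omega⟩) = ⟨0, by omega⟩ := by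
    apply Fin.ext
    rw [intervalCycle_apply_val ⟨Nat.zero_le _, by omega⟩]
    simp only [Fin.val_mk]
    split_ifs <;> omega
  rw [h2, intervalCycle_apply_val ⟨by omega, by omega⟩]
  simp only [Fin.val_mk]
  split_ifs with hc1 hc2
  · omega
  · exact hc2.elim
  · rfl

lemma Toper_apply_two (h : 0 < n) (τ : Equiv.Perm (Fin n)) (i : Fin n) :
    (Toper τ ⟨i.val + 2, by omega⟩).val =
      if (τ i).val ≤ (τ ⟨0, h⟩).val then (τ i).val + 1 else (τ i).val + 2 := by
  have hi := i.isLt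
  have hq : (((finRotate (n + 2))⁻¹) ^ 2) ⟨i.val + 2, by omega⟩ = ⟨i.val, by omega⟩ := by
    apply rot2_apply
    apply Fin.ext
    rw [finRotate_val, finRotate_val]
    simp only [Fin.val_mk]
    have e1 : (i.val + 1) % (n + 2) = i.val + 1 := Nat.mod_eq_of_lt (by omega)
    rw [e1, Nat.mod_eq_of_lt (by omega)]
  have hne1 : (⟨i.val, by omega⟩ : Fin (n + 2)) ≠ ⟨n, by omega⟩ := by
    rw [Ne, Fin.ext_iff]
    simp only [Fin.val_mk]
    omega
  have hne2 : (⟨i.val, by omega⟩ : Fin (n + 2)) ≠ ⟨n + 1, by omega⟩ := by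
    rw [Ne, Fin.ext_iff]
    simp only [Fin.val_mk]
    omega
  have hs : Equiv.swap (⟨n, by omega⟩ : Fin (n + 2)) ⟨n + 1, by omega⟩ ⟨i.val, by omega⟩
      = ⟨i.val, by omega⟩ := Equiv.swap_apply_of_ne_of_ne hne1 hne2
  have ht0 := (τ ⟨0, h⟩).isLt
  have hti := (τ i).isLt
  rw [Toper, dif_pos h]
  simp only [Equiv.Perm.mul_apply, hq, hs]
  rw [rho_apply τ i]
  clear hq hs hne1 hne2
  have h2 : (intervalCycle (n + 2) 0 n ⟨(τ i).val, by omega⟩) = ⟨(τ i).val + 1, by omega⟩ := by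
    apply Fin.ext
    rw [intervalCycle_apply_val (n := n + 2) (a := 0) (b := n) ⟨Nat.zero_le _, by omega⟩]
    simp only [Fin.val_mk]
    split_ifs <;> omega
  rw [h2, intervalCycle_apply_val (n := n + 2) (a := (τ ⟨0, h⟩).val + 2) (b := n + 1)
    ⟨by omega, by omega⟩]
  simp only [Fin.val_mk]
  split_ifs <;> omega

/-- The embedding `i ↦ i + 2` of `Fin n` into `Fin (n + 2)`. -/
def emb2 (n : ℕ) : Fin n ↪ Fin (n + 2) :=
  ⟨fun i => ⟨i.val + 2, by omega⟩, by
    intro a b hab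
    rw [Fin.ext_iff] at hab ⊢
    simpa using hab⟩

lemma emb2_apply (i : Fin n) : emb2 n i = ⟨i.val + 2, by omega⟩ := rfl

/-- The marked points `0` and `1` of `Fin (n + 2)`. -/
def pt0 (n : ℕ) : Fin (n + 2) := ⟨0, by omega⟩

def pt1 (n : ℕ) : Fin (n + 2) := ⟨1, by omega⟩

lemma Toper_pt0_val (h : 0 < n) (τ : Equiv.Perm (Fin n)) :
    (Toper τ (pt0 n)).val = (τ ⟨0, h⟩).val + 2 := Toper_apply_zero h τ

lemma Toper_pt1_val (h : 0 < n) (τ : Equiv.Perm (Fin n)) :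
    (Toper τ (pt1 n)).val = 0 := Toper_apply_one h τ

lemma Toper_emb2_val (h : 0 < n) (τ : Equiv.Perm (Fin n)) (i : Fin n) :
    (Toper τ (emb2 n i)).val =
      if (τ i).val ≤ (τ ⟨0, h⟩).val then (τ i).val + 1 else (τ i).val + 2 :=
  Toper_apply_two h τ i

/-- The weight `c(J)`: the number of `j ∈ J` with `τ(j) > τ(0)`. -/
def cwt (h : 0 < n) (τ : Equiv.Perm (Fin n)) (J : Finset (Fin n)) : ℕ :=
  (J.filter fun j => τ ⟨0, h⟩ < τ j).card

lemma chi_eq_sum (σ : Equiv.Perm (Fin n)) (I : Finset (Fin n)) :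
    chi σ I = ∑ i ∈ I, ∑ j ∈ I, (if i < j ∧ σ i < σ j then 1 else 0) := by
  rw [chi, Finset.card_filter, Finset.sum_product]

lemma chi_insert (σ : Equiv.Perm (Fin n)) {a : Fin n} {s : Finset (Fin n)} (ha : a ∉ s) :
    chi σ (insert a s) = chi σ s
      + ((∑ j ∈ s, if a < j ∧ σ a < σ j then 1 else 0)
      + (∑ i ∈ s, if i < a ∧ σ i < σ a then 1 else 0)) := by
  rw [chi_eq_sum, chi_eq_sum, Finset.sum_insert ha]
  simp only [Finset.sum_insert ha]
  rw [Finset.sum_add_distrib]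
  simp only [lt_irrefl, false_and, if_false]
  ring

lemma pt1_not_mem_map (J : Finset (Fin n)) : pt1 n ∉ J.map (emb2 n) := by
  rw [Finset.mem_map]
  rintro ⟨a, -, ha⟩
  rw [emb2_apply, Fin.ext_iff] at ha
  simp only [Fin.val_mk, pt1] at ha
  omega

lemma pt0_not_mem_map (J : Finset (Fin n)) : pt0 n ∉ J.map (emb2 n) := by
  rw [Finset.mem_map]
  rintro ⟨a, -, ha⟩
  rw [emb2_apply, Fin.ext_iff] at ha
  simp only [Fin.val_mk, pt0] at ha
  omega

lemma pt0_not_mem_insert (J : Finset (Fin n)) :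
    pt0 n ∉ insert (pt1 n) (J.map (emb2 n)) := by
  rw [Finset.mem_insert]
  rintro (hc | hc)
  · rw [Fin.ext_iff] at hc
    simp only [pt0, pt1, Fin.val_mk] at hc
    omega
  · exact pt0_not_mem_map J hc

lemma chi_map (h : 0 < n) (τ : Equiv.Perm (Fin n)) (J : Finset (Fin n)) :
    chi (Toper τ) (J.map (emb2 n)) = chi τ J := by
  rw [chi_eq_sum, chi_eq_sum, Finset.sum_map]
  refine Finset.sum_congr rfl fun i _ => ?_
  rw [Finset.sum_map]
  refine Finset.sum_congr rfl fun j _ => ?_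
  refine if_congr ?_ rfl rfl
  have hti := (τ i).isLt
  have htj := (τ j).isLt
  have ht0 := (τ ⟨0, h⟩).isLt
  rw [Fin.lt_def (a := emb2 n i), Fin.lt_def (a := Toper τ (emb2 n i)),
    Toper_emb2_val h, Toper_emb2_val h, Fin.lt_def (a := i), Fin.lt_def (a := τ i),
    emb2_apply, emb2_apply]
  simp only [Fin.val_mk]
  constructor
  · rintro ⟨h1, h2⟩
    refine ⟨by omega, ?_⟩
    split_ifs at h2 <;> omega
  · rintro ⟨h1, h2⟩
    refine ⟨by omega, ?_⟩
    split_ifs <;> omega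

lemma chi_insert_pt1 (h : 0 < n) (τ : Equiv.Perm (Fin n)) (J : Finset (Fin n)) :
    chi (Toper τ) (insert (pt1 n) (J.map (emb2 n))) = chi τ J + J.card := by
  rw [chi_insert _ (pt1_not_mem_map J), chi_map h]
  have h1 : (∑ j ∈ J.map (emb2 n),
      if pt1 n < j ∧ Toper τ (pt1 n) < Toper τ j then 1 else 0) = J.card := by
    rw [Finset.sum_map, Finset.card_eq_sum_ones]
    refine Finset.sum_congr rfl fun j _ => ?_
    rw [if_pos]
    constructor
    · rw [Fin.lt_def, emb2_apply]
      simp only [pt1, Fin.val_mk]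
      omega
    · rw [Fin.lt_def, Toper_pt1_val h, Toper_emb2_val h]
      split_ifs <;> omega
  have h2 : (∑ j ∈ J.map (emb2 n),
      if j < pt1 n ∧ Toper τ j < Toper τ (pt1 n) then 1 else 0) = 0 := by
    rw [Finset.sum_map]
    refine Finset.sum_eq_zero fun j _ => ?_
    rw [if_neg]
    rintro ⟨hlt, -⟩
    rw [Fin.lt_def, emb2_apply] at hlt
    simp only [pt1, Fin.val_mk] at hlt
    omega
  rw [h1, h2]
  ring

lemma cwt_sum (h : 0 < n) (τ : Equiv.Perm (Fin n)) (J : Finset (Fin n)) :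
    cwt h τ J = ∑ j ∈ J, if τ ⟨0, h⟩ < τ j then 1 else 0 := by
  rw [cwt, Finset.card_filter]

lemma chi_insert_pt0 (h : 0 < n) (τ : Equiv.Perm (Fin n)) (J : Finset (Fin n)) :
    chi (Toper τ) (insert (pt0 n) (J.map (emb2 n))) = chi τ J + cwt h τ J := by
  rw [chi_insert _ (pt0_not_mem_map J), chi_map h]
  have h1 : (∑ j ∈ J.map (emb2 n),
      if pt0 n < j ∧ Toper τ (pt0 n) < Toper τ j then 1 else 0) = cwt h τ J := by
    rw [Finset.sum_map, cwt_sum h]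
    refine Finset.sum_congr rfl fun j _ => ?_
    refine if_congr ?_ rfl rfl
    have htj := (τ j).isLt
    have ht0 := (τ ⟨0, h⟩).isLt
    rw [Fin.lt_def (a := pt0 n), Fin.lt_def (a := Toper τ (pt0 n)), Toper_pt0_val h,
      Toper_emb2_val h, Fin.lt_def (a := τ ⟨0, h⟩), emb2_apply]
    simp only [pt0, Fin.val_mk]
    constructor
    · rintro ⟨-, h2⟩
      split_ifs at h2 <;> omega
    · intro h2
      refine ⟨by omega, ?_⟩
      split_ifs <;> omega
  have h2 : (∑ j ∈ J.map (emb2 n),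
      if j < pt0 n ∧ Toper τ j < Toper τ (pt0 n) then 1 else 0) = 0 := by
    rw [Finset.sum_map]
    refine Finset.sum_eq_zero fun j _ => ?_
    rw [if_neg]
    rintro ⟨hlt, -⟩
    rw [Fin.lt_def, emb2_apply] at hlt
    simp only [pt0, Fin.val_mk] at hlt
    omega
  rw [h1, h2]
  ring

lemma chi_insert_pt01 (h : 0 < n) (τ : Equiv.Perm (Fin n)) (J : Finset (Fin n)) :
    chi (Toper τ) (insert (pt0 n) (insert (pt1 n) (J.map (emb2 n))))
      = (chi τ J + J.card) + cwt h τ J := by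
  rw [chi_insert _ (pt0_not_mem_insert J), chi_insert_pt1 h]
  have h1 : (∑ j ∈ insert (pt1 n) (J.map (emb2 n)),
      if pt0 n < j ∧ Toper τ (pt0 n) < Toper τ j then 1 else 0) = cwt h τ J := by
    rw [Finset.sum_insert (pt1_not_mem_map J)]
    have hz : (if pt0 n < pt1 n ∧ Toper τ (pt0 n) < Toper τ (pt1 n) then 1 else 0) = 0 := by
      rw [if_neg]
      rintro ⟨-, hlt⟩
      rw [Fin.lt_def, Toper_pt0_val h, Toper_pt1_val h] at hlt
      omega
    rw [hz, Finset.sum_map, cwt_sum h, zero_add]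
    refine Finset.sum_congr rfl fun j _ => ?_
    refine if_congr ?_ rfl rfl
    have htj := (τ j).isLt
    have ht0 := (τ ⟨0, h⟩).isLt
    rw [Fin.lt_def (a := pt0 n), Fin.lt_def (a := Toper τ (pt0 n)), Toper_pt0_val h,
      Toper_emb2_val h, Fin.lt_def (a := τ ⟨0, h⟩), emb2_apply]
    simp only [pt0, Fin.val_mk]
    constructor
    · rintro ⟨-, h2⟩
      split_ifs at h2 <;> omega
    · intro h2
      refine ⟨by omega, ?_⟩
      split_ifs <;> omega
  have h2 : (∑ j ∈ insert (pt1 n) (J.map (emb2 n)),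
      if j < pt0 n ∧ Toper τ j < Toper τ (pt0 n) then 1 else 0) = 0 := by
    refine Finset.sum_eq_zero fun j _ => ?_
    rw [if_neg]
    rintro ⟨hlt, -⟩
    rw [Fin.lt_def] at hlt
    simp only [pt0, Fin.val_mk] at hlt
    omega
  rw [h1, h2]
  ring

lemma chi_insert_zero (h : 0 < n) (τ : Equiv.Perm (Fin n)) {J : Finset (Fin n)}
    (hz : (⟨0, h⟩ : Fin n) ∉ J) :
    chi τ (insert ⟨0, h⟩ J) = chi τ J + cwt h τ J := by
  rw [chi_insert _ hz]
  have h1 : (∑ j ∈ J, if (⟨0, h⟩ : Fin n) < j ∧ τ ⟨0, h⟩ < τ j then 1 else 0)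
      = cwt h τ J := by
    rw [cwt_sum h]
    refine Finset.sum_congr rfl fun j hj => ?_
    refine if_congr ?_ rfl rfl
    have hjne : j.val ≠ 0 := by
      intro hc
      exact hz (by rwa [show j = ⟨0, h⟩ from Fin.ext hc] at hj)
    constructor
    · exact fun hx => hx.2
    · intro hx
      refine ⟨?_, hx⟩
      rw [Fin.lt_def]
      simp only [Fin.val_mk]
      omega
  have h2 : (∑ j ∈ J, if j < (⟨0, h⟩ : Fin n) ∧ τ j < τ ⟨0, h⟩ then 1 else 0) = 0 := by
    refine Finset.sum_eq_zero fun j _ => ?_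
    rw [if_neg]
    rintro ⟨hlt, -⟩
    rw [Fin.lt_def] at hlt
    simp only [Fin.val_mk] at hlt
    omega
  rw [h1, h2]
  ring

lemma cwt_insert_zero (h : 0 < n) (τ : Equiv.Perm (Fin n)) (J : Finset (Fin n)) :
    cwt h τ (insert ⟨0, h⟩ J) = cwt h τ J := by
  rw [cwt, cwt, Finset.filter_insert, if_neg (lt_irrefl _)]

lemma card_insert_pt1 (J : Finset (Fin n)) :
    (insert (pt1 n) (J.map (emb2 n))).card = J.card + 1 := by
  rw [Finset.card_insert_of_notMem (pt1_not_mem_map J), Finset.card_map]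

lemma card_insert_pt0 (J : Finset (Fin n)) :
    (insert (pt0 n) (J.map (emb2 n))).card = J.card + 1 := by
  rw [Finset.card_insert_of_notMem (pt0_not_mem_map J), Finset.card_map]

lemma card_insert_pt01 (J : Finset (Fin n)) :
    (insert (pt0 n) (insert (pt1 n) (J.map (emb2 n)))).card = J.card + 2 := by
  rw [Finset.card_insert_of_notMem (pt0_not_mem_insert J), card_insert_pt1]

lemma sum_powerset_map {α β : Type*} [DecidableEq α] [DecidableEq β]
    (e : α ↪ β) (s : Finset α) (f : Finset β → ℤ) :
    ∑ t ∈ (s.map e).powerset, f t = ∑ u ∈ s.powerset, f (u.map e) := by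
  have hps : (s.map e).powerset
      = s.powerset.map ⟨fun u => u.map e, fun u v huv => Finset.map_injective e huv⟩ := by
    ext t
    simp only [Finset.mem_powerset, Finset.mem_map, Function.Embedding.coeFn_mk]
    rw [Finset.subset_map_iff]
    constructor
    · rintro ⟨u, h1, h2⟩
      exact ⟨u, h1, h2.symm⟩
    · rintro ⟨u, h1, h2⟩
      exact ⟨u, h1, h2.symm⟩
  rw [hps, Finset.sum_map]
  rfl

lemma univ_fin_add_two (n : ℕ) :
    (Finset.univ : Finset (Fin (n + 2)))
      = insert (pt0 n) (insert (pt1 n) ((Finset.univ : Finset (Fin n)).map (emb2 n))) := by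
  ext x
  simp only [Finset.mem_univ, Finset.mem_insert, Finset.mem_map, true_iff]
  by_cases hx0 : x.val = 0
  · exact Or.inl (Fin.ext hx0)
  · by_cases hx1 : x.val = 1
    · exact Or.inr (Or.inl (Fin.ext hx1))
    · refine Or.inr (Or.inr ⟨⟨x.val - 2, by have := x.isLt; omega⟩, trivial, ?_⟩)
      rw [emb2_apply, Fin.ext_iff]
      simp only [Fin.val_mk]
      have := x.isLt
      omega

end ArfT

/-- The Arf invariant doubles under the operator `T`: `Ā(T τ) = 2 Ā(τ)`. -/
theorem arf_of_T (n : ℕ) (hn : 1 ≤ n) (τ : Equiv.Perm (Fin n)) :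
    arfBar (Toper τ) = 2 * arfBar τ := by
  have h : 0 < n := hn
  rw [arfBar, arfBar, univ_fin_add_two n,
    Finset.sum_powerset_insert (pt0_not_mem_insert _) _,
    Finset.sum_powerset_insert (pt1_not_mem_map _) _,
    Finset.sum_powerset_insert (pt1_not_mem_map _) _,
    sum_powerset_map, sum_powerset_map, sum_powerset_map, sum_powerset_map,
    ← Finset.sum_add_distrib, ← Finset.sum_add_distrib, ← Finset.sum_add_distrib,
    Finset.mul_sum]
  rw [show (Finset.univ : Finset (Fin n)) = insert ⟨0, h⟩ (Finset.univ.erase ⟨0, h⟩) from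
    (Finset.insert_erase (Finset.mem_univ _)).symm]
  rw [Finset.sum_powerset_insert (Finset.notMem_erase _ _) _,
    Finset.sum_powerset_insert (Finset.notMem_erase _ _) _,
    ← Finset.sum_add_distrib, ← Finset.sum_add_distrib]
  refine Finset.sum_congr rfl fun u hu => ?_
  have hz : (⟨0, h⟩ : Fin n) ∉ u := fun hc =>
    Finset.notMem_erase _ _ (Finset.mem_powerset.mp hu hc)
  simp only [chi_map h, chi_insert_pt1 h, chi_insert_pt0 h, chi_insert_pt01 h,
    Finset.card_map, card_insert_pt1, card_insert_pt0, card_insert_pt01,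
    chi_insert_zero h τ hz, cwt_insert_zero h, Finset.card_insert_of_notMem hz]
  have hC : ((-1 : ℤ) ^ (cwt h τ u)) * ((-1 : ℤ) ^ (cwt h τ u)) = 1 := by
    rw [← pow_add]
    exact Even.neg_one_pow ⟨_, rfl⟩
  linear_combination ((-1 : ℤ) ^ (chi τ u)
    * ((-1 : ℤ) ^ u.card + (-1 : ℤ) ^ u.card * (-1 : ℤ) ^ u.card)) * hC

end Rauzy
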